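/- Let β ≥ 1, α < β + 1 and λ ≠ 0, and set c = −α/(2β) + 1/(2β) + 1/2 and e = 2c = −α/β + 1/β + 1. Then for all real x > 0, ₁F₂(c; c+1, 3/2; λ²x^{2β}/4) = (1/2)[ ₂F₂(1, e; 2, e+1; λx^β) + ₂F₂(1, e; 2, e+1; −λx^β) ], where ₁F₂ and ₂F₂ are given by their defining power series with Pochhammer coefficients. -/

import Mathlib

noncomputable def poch (a : ℝ) (n : ℕ) : ℝ := ∏ i ∈ Finset.range n, (a + (i : ℝ))

lemma poch_succ (a : ℝ) (n : ℕ) : poch a (n+1) = poch a n * (a + n) :=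
  Finset.prod_range_succ _ _

lemma poch_pos {a : ℝ} (ha : 0 < a) (n : ℕ) : 0 < poch a n :=
  Finset.prod_pos (fun i _ => by positivity)

lemma poch_le {a b : ℝ} (ha : 0 < a) (hab : a ≤ b) (n : ℕ) : poch a n ≤ poch b n :=
  Finset.prod_le_prod (fun i _ => by positivity) (fun i _ => by linarith)

lemma poch_one (n : ℕ) : poch 1 n = n.factorial := by
  induction n with
  | zero => simp [poch]
  | succ n ih => rw [poch_succ, ih, Nat.factorial_succ]; push_cast; ring

lemma poch_two (n : ℕ) : poch 2 n = (n+1).factorial := by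
  induction n with
  | zero => simp [poch]
  | succ n ih => rw [poch_succ, ih]; push_cast [Nat.factorial_succ]; ring

lemma poch_ratio (a : ℝ) (n : ℕ) : poch a n * (a + n) = a * poch (a+1) n := by
  induction n with
  | zero => simp [poch]
  | succ n ih =>
    rw [poch_succ a, poch_succ (a+1)]
    push_cast
    linear_combination (a + (n:ℝ) + 1) * ih

lemma poch_th (n : ℕ) : poch (3/2) n * 4^n * (n.factorial : ℝ) = ((2*n+1).factorial : ℝ) := by
  induction n with
  | zero => simp [poch]
  | succ n ih =>
    have h : 2*(n+1)+1 = (2*n+1) + 1 + 1 := by ring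
    rw [poch_succ, h, Nat.factorial_succ, Nat.factorial_succ, Nat.factorial_succ]
    push_cast
    linear_combination ((3/2 + (n:ℝ)) * 4 * ((n:ℝ)+1)) * ih

theorem stmt_19 (β α l : ℝ) (hβ : 1 ≤ β) (hα : α < β + 1) (hl : l ≠ 0)
    (c e : ℝ) (hc : c = -α / (2 * β) + 1 / (2 * β) + 1 / 2) (he : e = 2 * c)
    (x : ℝ) (hx : 0 < x) :
    (∑' n : ℕ, poch c n / (poch (c + 1) n * poch (3/2) n) *
        (l ^ 2 * x ^ (2 * β) / 4) ^ n / (n.factorial : ℝ))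
      = (1 / 2) *
        ((∑' n : ℕ, poch 1 n * poch e n / (poch 2 n * poch (e + 1) n) *
            (l * x ^ β) ^ n / (n.factorial : ℝ)) +
          ∑' n : ℕ, poch 1 n * poch e n / (poch 2 n * poch (e + 1) n) *
            (-(l * x ^ β)) ^ n / (n.factorial : ℝ)) := by
  have hβ0 : (0:ℝ) < β := lt_of_lt_of_le one_pos hβ
  have hc0 : 0 < c := by
    have h1 : c = (β + 1 - α) / (2*β) := by rw [hc]; field_simp; ring
    rw [h1]; apply div_pos <;> linarith
  have he0 : 0 < e := by rw [he]; linarith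
  set y := x ^ β with hy
  have hy0 : 0 < y := Real.rpow_pos_of_pos hx β
  set z := l * y with hz
  have hz0 : z ≠ 0 := mul_ne_zero hl hy0.ne'
  have hx2 : x ^ (2*β) = y^2 := by rw [two_mul, Real.rpow_add hx, sq]
  have hw : l ^ 2 * x ^ (2*β) / 4 = z^2/4 := by rw [hx2, hz]; ring
  rw [hw]
  -- summability
  have key : ∀ w : ℝ, Summable (fun n : ℕ =>
      poch 1 n * poch e n / (poch 2 n * poch (e+1) n) * w ^ n / n.factorial) := by
    intro w
    apply Summable.of_abs
    apply Summable.of_nonneg_of_le (fun n => abs_nonneg _) _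
      (Real.summable_pow_div_factorial |w|)
    intro n
    have h1 : 0 < poch 2 n * poch (e+1) n :=
      mul_pos (poch_pos two_pos n) (poch_pos (by linarith) n)
    have h2 : 0 ≤ poch 1 n * poch e n :=
      le_of_lt (mul_pos (poch_pos one_pos n) (poch_pos he0 n))
    have hle : poch 1 n * poch e n ≤ poch 2 n * poch (e+1) n :=
      mul_le_mul (poch_le one_pos one_le_two n) (poch_le he0 (by linarith) n)
        (poch_pos he0 n).le (poch_pos two_pos n).le
    have hfrac : poch 1 n * poch e n / (poch 2 n * poch (e+1) n) ≤ 1 :=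
      (div_le_one h1).mpr hle
    have hfn : (0:ℝ) ≤ poch 1 n * poch e n / (poch 2 n * poch (e+1) n) :=
      div_nonneg h2 h1.le
    calc |poch 1 n * poch e n / (poch 2 n * poch (e+1) n) * w ^ n / n.factorial|
        = poch 1 n * poch e n / (poch 2 n * poch (e+1) n) * |w| ^ n / n.factorial := by
          rw [abs_div, abs_mul, abs_pow, abs_of_nonneg hfn, Nat.abs_cast]
      _ ≤ 1 * |w| ^ n / n.factorial := by gcongr
      _ = |w| ^ n / n.factorial := by ring
  rw [← Summable.tsum_add (key z) (key (-z))]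
  have hinj : Function.Injective (fun k : ℕ => 2 * k) := fun a b h => by
    dsimp at h; omega
  have hvan : ∀ n : ℕ, n ∉ Set.range (fun k : ℕ => 2 * k) →
      (poch 1 n * poch e n / (poch 2 n * poch (e+1) n) * z ^ n / n.factorial +
       poch 1 n * poch e n / (poch 2 n * poch (e+1) n) * (-z) ^ n / n.factorial) = 0 := by
    intro n hn
    have hodd : Odd n := by
      rcases Nat.even_or_odd n with h | h
      · obtain ⟨m, hm⟩ := h
        exact absurd ⟨m, show 2 * m = n by omega⟩ hn
      · exact h
    rw [hodd.neg_pow]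
    ring
  have hsupp : Function.support (fun n : ℕ =>
      poch 1 n * poch e n / (poch 2 n * poch (e+1) n) * z ^ n / n.factorial +
      poch 1 n * poch e n / (poch 2 n * poch (e+1) n) * (-z) ^ n / n.factorial) ⊆
      Set.range (fun k : ℕ => 2 * k) := by
    intro n hn
    by_contra h
    exact hn (hvan n h)
  have hre := Function.Injective.tsum_eq hinj hsupp
  rw [show (∑' (n : ℕ), (poch 1 n * poch e n / (poch 2 n * poch (e+1) n) * z ^ n / n.factorial +
      poch 1 n * poch e n / (poch 2 n * poch (e+1) n) * (-z) ^ n / n.factorial)) =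
      ∑' (k : ℕ), (poch 1 (2*k) * poch e (2*k) / (poch 2 (2*k) * poch (e+1) (2*k)) * z ^ (2*k) / (2*k).factorial +
      poch 1 (2*k) * poch e (2*k) / (poch 2 (2*k) * poch (e+1) (2*k)) * (-z) ^ (2*k) / (2*k).factorial)
      from hre.symm]
  rw [← tsum_mul_left]
  apply tsum_congr
  intro k
  have hnegz : (-z) ^ (2*k) = z ^ (2*k) := by
    rw [pow_mul, pow_mul, neg_sq]
  rw [hnegz]
  rw [poch_one, poch_two]
  have I1 := poch_ratio c k
  have I2 := poch_ratio e (2*k)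
  have I3 := poch_th k
  have hfact : ((2*k+1+1).factorial : ℝ) = (2*(k:ℝ)+2) * ((2*k+1).factorial : ℝ) := by
    rw [Nat.factorial_succ]; push_cast; ring
  have hck : (0:ℝ) < c + k := by positivity
  have hek : (0:ℝ) < e + (2*k : ℕ) := by positivity
  have hp1 : (0:ℝ) < poch (c+1) k := poch_pos (by linarith) k
  have hp2 : (0:ℝ) < poch (3/2) k := poch_pos (by norm_num) k
  have hp3 : (0:ℝ) < poch (e+1) (2*k) := poch_pos (by linarith) (2*k)
  have hf1 : ((2*k).factorial : ℝ) ≠ 0 := Nat.cast_ne_zero.mpr (Nat.factorial_ne_zero _)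
  have hf2 : ((2*k+1).factorial : ℝ) ≠ 0 := Nat.cast_ne_zero.mpr (Nat.factorial_ne_zero _)
  have hf3 : ((k).factorial : ℝ) ≠ 0 := Nat.cast_ne_zero.mpr (Nat.factorial_ne_zero _)
  have hfr1 : poch c k / poch (c+1) k = c / (c + k) := by
    rw [div_eq_div_iff hp1.ne' hck.ne']
    exact I1
  have hfr2 : poch e (2*k) / poch (e+1) (2*k) = e / (e + (2*k : ℕ)) := by
    rw [div_eq_div_iff hp3.ne' hek.ne']
    exact I2
  have hC : poch (3/2) k = ((2*k+1).factorial : ℝ) / (4^k * k.factorial) := by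
    rw [eq_div_iff (by positivity)]
    linear_combination I3
  rw [hC]
  push_cast at hfr2 I2 ⊢
  rw [he] at hfr2 ⊢
  field_simp
  rw [he] at I2
  have hkey : poch c k * poch (2*c+1) (2*k) = poch (2*c) (2*k) * poch (c+1) k := by
    apply mul_left_cancel₀ hc0.ne'
    linear_combination (poch (2*c) (2*k)) * I1 - (poch c k / 2) * I2
  have hQ : poch (2*c+1) (2*k) ≠ 0 := (poch_pos (by linarith) (2*k)).ne'
  have h4 : (4:ℝ)^k * (z^2/4)^k = z^(2*k) := by
    rw [← mul_pow, pow_mul]; congr 1; ring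
  rw [show c*2 = 2*c by ring, eq_div_iff hQ]
  linear_combination (2 * poch c k * poch (2*c+1) (2*k)) * h4 + (2 * z^(2*k)) * hkey
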